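/- Let u, v be orthonormal vectors in the plane, let S be a finite set of n points, and let K be a point such that each of the four closed half-planes { x | ⟪u, x − K⟫ ≥ 0 }, { x | ⟪u, x − K⟫ ≤ 0 }, { x | ⟪v, x − K⟫ ≥ 0 }, { x | ⟪v, x − K⟫ ≤ 0 } contains at least ⌈n/2⌉ points of S. Let F be a natural number with F < ⌈n/2⌉ and let N ⊆ S satisfy |S \ N| ≤ F. Then for every p ∈ N there exists q ∈ N with dist(p, K) ≤ √2 · dist(p, q). -/

import Mathlib

open scoped Classical
open RealInnerProductSpace

lemma gather_key (w : EuclideanSpace ℝ (Fin 2)) (hw : ‖w‖ = 1)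
    (S N : Finset (EuclideanSpace ℝ (Fin 2))) (K : EuclideanSpace ℝ (Fin 2))
    (hs : ⌈(S.card : ℚ) / 2⌉₊ ≤ (S.filter fun x => ⟪w, x - K⟫ ≤ 0).card)
    (F : ℕ) (hF : F < ⌈(S.card : ℚ) / 2⌉₊) (hNS : N ⊆ S) (hNF : (S \ N).card ≤ F)
    (p : EuclideanSpace ℝ (Fin 2)) (hpw : 0 ≤ ⟪w, p - K⟫) :
    ∃ q ∈ N, ⟪w, p - K⟫ ≤ dist p q := by
  set T := S.filter fun x => ⟪w, x - K⟫ ≤ 0 with hT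
  have hTS : T ⊆ S := Finset.filter_subset _ _
  have hsub : T \ N ⊆ S \ N := Finset.sdiff_subset_sdiff hTS le_rfl
  have hlt : (T \ N).card < T.card :=
    lt_of_le_of_lt (le_trans (Finset.card_le_card hsub) hNF) (lt_of_lt_of_le hF hs)
  have : (T ∩ N).Nonempty := by
    by_contra h
    rw [Finset.not_nonempty_iff_eq_empty] at h
    have : T \ N = T := by
      ext x
      simp only [Finset.mem_sdiff]
      constructor
      · rintro ⟨hx, _⟩; exact hx
      · intro hx
        refine ⟨hx, fun hxN => ?_⟩
        have : x ∈ T ∩ N := Finset.mem_inter.mpr ⟨hx, hxN⟩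
        simp [h] at this
    rw [this] at hlt; exact lt_irrefl _ hlt
  obtain ⟨q, hq⟩ := this
  rw [Finset.mem_inter] at hq
  obtain ⟨hqT, hqN⟩ := hq
  have hqw : ⟪w, q - K⟫ ≤ 0 := (Finset.mem_filter.mp hqT).2
  refine ⟨q, hqN, ?_⟩
  have h1 : ⟪w, p - K⟫ ≤ ⟪w, p - q⟫ := by
    have : ⟪w, p - q⟫ = ⟪w, p - K⟫ - ⟪w, q - K⟫ := by
      rw [← inner_sub_right]; congr 1; abel
    linarith
  calc ⟪w, p - K⟫ ≤ ⟪w, p - q⟫ := h1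
    _ ≤ ‖w‖ * ‖p - q‖ := real_inner_le_norm _ _
    _ = dist p q := by rw [hw, one_mul, dist_eq_norm]

theorem intersection_point_gathering_bound
    (u v : EuclideanSpace ℝ (Fin 2)) (hu : ‖u‖ = 1) (hv : ‖v‖ = 1)
    (huv : ⟪u, v⟫ = 0)
    (S : Finset (EuclideanSpace ℝ (Fin 2))) (K : EuclideanSpace ℝ (Fin 2))
    (h1 : ⌈(S.card : ℚ) / 2⌉₊ ≤ (S.filter fun x => 0 ≤ ⟪u, x - K⟫).card)
    (h2 : ⌈(S.card : ℚ) / 2⌉₊ ≤ (S.filter fun x => ⟪u, x - K⟫ ≤ 0).card)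
    (h3 : ⌈(S.card : ℚ) / 2⌉₊ ≤ (S.filter fun x => 0 ≤ ⟪v, x - K⟫).card)
    (h4 : ⌈(S.card : ℚ) / 2⌉₊ ≤ (S.filter fun x => ⟪v, x - K⟫ ≤ 0).card)
    (F : ℕ) (hF : F < ⌈(S.card : ℚ) / 2⌉₊)
    (N : Finset (EuclideanSpace ℝ (Fin 2))) (hNS : N ⊆ S)
    (hNF : (S \ N).card ≤ F) :
    ∀ p ∈ N, ∃ q ∈ N, dist p K ≤ Real.sqrt 2 * dist p q := by
  intro p hp
  -- orthonormal family
  have horth : Orthonormal ℝ ![u, v] := by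
    rw [orthonormal_iff_ite]
    intro i j
    fin_cases i <;> fin_cases j
    · show ⟪u, u⟫ = if (0 : Fin 2) = 0 then (1:ℝ) else 0
      rw [if_pos rfl, real_inner_self_eq_norm_sq, hu]; norm_num
    · show ⟪u, v⟫ = if (0 : Fin 2) = 1 then (1:ℝ) else 0
      rw [if_neg (by decide), huv]
    · show ⟪v, u⟫ = if (1 : Fin 2) = 0 then (1:ℝ) else 0
      rw [if_neg (by decide), real_inner_comm, huv]
    · show ⟪v, v⟫ = if (1 : Fin 2) = 1 then (1:ℝ) else 0
      rw [if_pos rfl, real_inner_self_eq_norm_sq, hv]; norm_num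
  have hcard : Fintype.card (Fin 2) = Module.finrank ℝ (EuclideanSpace ℝ (Fin 2)) := by
    simp [finrank_euclideanSpace]
  let b : OrthonormalBasis (Fin 2) ℝ (EuclideanSpace ℝ (Fin 2)) :=
    (basisOfOrthonormalOfCardEqFinrank horth hcard).toOrthonormalBasis
      (by rwa [coe_basisOfOrthonormalOfCardEqFinrank])
  have hb : ∀ i, b i = ![u, v] i := by
    intro i
    have : (b : Fin 2 → _) = ![u, v] := by
      simp [b, Module.Basis.coe_toOrthonormalBasis, coe_basisOfOrthonormalOfCardEqFinrank]
    rw [this]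
  have hpar : dist p K ^ 2 = ⟪u, p - K⟫ ^ 2 + ⟪v, p - K⟫ ^ 2 := by
    have := b.sum_inner_mul_inner (p - K) (p - K)
    rw [Fin.sum_univ_two, hb 0, hb 1] at this
    simp only [Matrix.cons_val_zero, Matrix.cons_val_one, Matrix.head_cons] at this
    rw [dist_eq_norm, ← real_inner_self_eq_norm_sq, ← this]
    rw [real_inner_comm (p - K) u, real_inner_comm (p - K) v]
    ring
  set a1 : ℝ := ⟪u, p - K⟫ with ha1
  set a2 : ℝ := ⟪v, p - K⟫ with ha2
  have key : ∀ (w : EuclideanSpace ℝ (Fin 2)), ‖w‖ = 1 →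
      ⌈(S.card : ℚ) / 2⌉₊ ≤ (S.filter fun x => ⟪w, x - K⟫ ≤ 0).card →
      0 ≤ ⟪w, p - K⟫ → ∃ q ∈ N, ⟪w, p - K⟫ ≤ dist p q := fun w hw hs hpw =>
    gather_key w hw S N K hs F hF hNS hNF p hpw
  have hneg : ∀ (w : EuclideanSpace ℝ (Fin 2)),
      (S.filter fun x => ⟪-w, x - K⟫ ≤ 0) = (S.filter fun x => 0 ≤ ⟪w, x - K⟫) := by
    intro w; apply Finset.filter_congr; intro x _
    rw [inner_neg_left]; exact neg_nonpos
  -- main case split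
  have main : ∃ q ∈ N, max |a1| |a2| ≤ dist p q := by
    rcases le_total |a2| |a1| with hle | hle
    · rcases le_total 0 a1 with h0 | h0
      · obtain ⟨q, hqN, hq⟩ := key u hu h2 h0
        exact ⟨q, hqN, by rw [max_eq_left hle, abs_of_nonneg h0]; exact hq⟩
      · obtain ⟨q, hqN, hq⟩ := key (-u) (by rw [norm_neg]; exact hu)
          (by rw [hneg]; exact h1) (by rw [inner_neg_left]; rw [ha1] at h0; linarith)
        refine ⟨q, hqN, ?_⟩
        rw [inner_neg_left, ← ha1] at hq
        rw [max_eq_left hle, abs_of_nonpos h0]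
        exact hq
    · rcases le_total 0 a2 with h0 | h0
      · obtain ⟨q, hqN, hq⟩ := key v hv h4 h0
        exact ⟨q, hqN, by rw [max_eq_right hle, abs_of_nonneg h0]; exact hq⟩
      · obtain ⟨q, hqN, hq⟩ := key (-v) (by rw [norm_neg]; exact hv)
          (by rw [hneg]; exact h3) (by rw [inner_neg_left]; rw [ha2] at h0; linarith)
        refine ⟨q, hqN, ?_⟩
        rw [inner_neg_left, ← ha2] at hq
        rw [max_eq_right hle, abs_of_nonpos h0]
        exact hq
  obtain ⟨q, hqN, hq⟩ := main
  refine ⟨q, hqN, ?_⟩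
  have hm : max |a1| |a2| ^ 2 * 2 ≥ dist p K ^ 2 := by
    rw [hpar]
    have h1' : a1 ^ 2 ≤ max |a1| |a2| ^ 2 := by
      rw [← sq_abs a1]; exact pow_le_pow_left₀ (abs_nonneg _) (le_max_left _ _) 2
    have h2' : a2 ^ 2 ≤ max |a1| |a2| ^ 2 := by
      rw [← sq_abs a2]; exact pow_le_pow_left₀ (abs_nonneg _) (le_max_right _ _) 2
    linarith
  have hmn : (0:ℝ) ≤ max |a1| |a2| := le_trans (abs_nonneg _) (le_max_left _ _)
  have : dist p K ≤ Real.sqrt 2 * max |a1| |a2| := by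
    have h := Real.sqrt_le_sqrt (by linarith : dist p K ^ 2 ≤ 2 * max |a1| |a2| ^ 2)
    rwa [Real.sqrt_sq dist_nonneg, Real.sqrt_mul (by norm_num) _, Real.sqrt_sq hmn] at h
  calc dist p K ≤ Real.sqrt 2 * max |a1| |a2| := this
    _ ≤ Real.sqrt 2 * dist p q := by
        apply mul_le_mul_of_nonneg_left hq (Real.sqrt_nonneg 2)
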